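/- The Gaussian weighted length of the torus curve rescaled by s = (−t)^{−1/2} converges as t → −∞: lim_{t→−∞} (4π)^{−1/2} ∫₀^{2π} (−t)^{−1/2}·|∂_θγ(θ,t)|·exp(−|γ(θ,t)|²/(−4t)) dθ = k_m·√(2π/e). -/

import Mathlib

open Filter Real

lemma ratio_limit (m : ℕ) (k : Fin m → ℕ) (hkpos : ∀ j, 0 < k j) (hkmono : StrictMono k)
    (jmax : Fin m) (hjmax : ∀ j, k j ≤ k jmax) :
    Tendsto (fun u : ℝ =>
        (∑ j : Fin m, ((k j : ℝ))^2 * u ^ (2 * (k j)^2)) / (∑ j : Fin m, u ^ (2 * (k j)^2)))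
      atTop (nhds ((k jmax : ℝ)^2)) := by
  have hterm : ∀ j : Fin m, Tendsto (fun u : ℝ => u ^ (2*(k j)^2) / u ^ (2*(k jmax)^2))
      atTop (nhds (if j = jmax then 1 else 0)) := by
    intro j
    by_cases hj : j = jmax
    · subst hj
      simp only [if_pos rfl]
      refine Tendsto.congr' ?_ tendsto_const_nhds
      filter_upwards [eventually_gt_atTop (0:ℝ)] with u hu
      rw [div_self (by positivity)]; simp
    · simp only [if_neg hj]
      have hlt : 2 * (k j)^2 < 2 * (k jmax)^2 := by
        have h1 : k j ≤ k jmax := hjmax j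
        have h2 : k j ≠ k jmax := fun h => hj (hkmono.injective h)
        have : k j < k jmax := lt_of_le_of_ne h1 h2
        nlinarith [hkpos j]
      have heq : ∀ᶠ u : ℝ in atTop, (u⁻¹) ^ (2*(k jmax)^2 - 2*(k j)^2)
          = u ^ (2*(k j)^2) / u ^ (2*(k jmax)^2) := by
        filter_upwards [eventually_gt_atTop (0:ℝ)] with u hu
        rw [inv_pow, pow_sub₀ _ (ne_of_gt hu) hlt.le, mul_inv, inv_inv, mul_comm,
          ← div_eq_mul_inv]
      refine Tendsto.congr' heq ?_
      have h0 : Tendsto (fun u : ℝ => u⁻¹) atTop (nhds 0) := tendsto_inv_atTop_zero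
      have := h0.pow (2*(k jmax)^2 - 2*(k j)^2)
      rwa [zero_pow (by omega)] at this
  have hnum : Tendsto (fun u : ℝ => ∑ j : Fin m, ((k j:ℝ))^2 * (u ^ (2*(k j)^2) / u ^ (2*(k jmax)^2)))
      atTop (nhds ((k jmax : ℝ)^2)) := by
    have := tendsto_finset_sum Finset.univ (fun j _ => ((hterm j).const_mul (((k j:ℝ))^2)))
    convert this using 2
    rw [Finset.sum_congr rfl (fun j _ => by rfl)]
    simp [Finset.sum_ite_eq' Finset.univ jmax fun j => ((k j:ℝ))^2, mul_ite]
  have hden : Tendsto (fun u : ℝ => ∑ j : Fin m, (u ^ (2*(k j)^2) / u ^ (2*(k jmax)^2)))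
      atTop (nhds 1) := by
    have := tendsto_finset_sum Finset.univ (fun j (_ : j ∈ Finset.univ) => hterm j)
    convert this using 2
    simp [Finset.sum_ite_eq' Finset.univ jmax fun _ => (1:ℝ)]
  have := hnum.div hden one_ne_zero
  rw [div_one] at this
  refine Tendsto.congr' ?_ this
  filter_upwards [eventually_gt_atTop (0:ℝ)] with u hu
  show (∑ j : Fin m, ((k j:ℝ))^2 * (u ^ (2*(k j)^2) / u ^ (2*(k jmax)^2))) /
      (∑ j : Fin m, (u ^ (2*(k j)^2) / u ^ (2*(k jmax)^2))) = _
  have hp : (u:ℝ) ^ (2*(k jmax)^2) ≠ 0 := by positivity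
  simp only [← mul_div_assoc]
  rw [← Finset.sum_div, ← Finset.sum_div, div_div_div_cancel_right₀ hp]

/-- As `t → -∞`, the Gaussian weighted length of the torus curve rescaled by
`s = (-t)^{-1/2}` converges to `k_m √(2π/e)`, i.e.
`lim_{t→-∞} (4π)^{-1/2} ∫₀^{2π} (-t)^{-1/2} |∂_θ γ(θ,t)| exp(-|γ(θ,t)|²/(-4t)) dθ
  = k_m √(2π/e)`.  (Here `exp(-|γ|²/(-4t)) = exp(|γ|²/(4t))` since `t < 0`, and
`jmax` is the index of `k_m`.) -/
theorem torus_curve_gaussian_length_limit (m : ℕ) (hm : 1 ≤ m) (k : Fin m → ℕ)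
    (hkpos : ∀ j, 0 < k j) (hkmono : StrictMono k)
    (r : ℝ → ℝ)
    (hr : ∀ t < (0:ℝ), 0 < r t ∧ ∑ j : Fin m, (r t) ^ (2 * (k j) ^ 2) = -2 * t)
    (γ : ℝ → ℝ → EuclideanSpace ℝ (Fin m × Fin 2))
    (hγ : ∀ (θ t : ℝ) (j : Fin m),
      γ θ t (j, 0) = (r t) ^ ((k j) ^ 2) * Real.cos (k j * θ) ∧
      γ θ t (j, 1) = (r t) ^ ((k j) ^ 2) * Real.sin (k j * θ))
    (jmax : Fin m) (hjmax : (jmax : ℕ) = m - 1) :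
    Filter.Tendsto
      (fun t => (Real.sqrt (4 * Real.pi))⁻¹ *
        ∫ θ in (0:ℝ)..(2 * Real.pi),
          (Real.sqrt (-t))⁻¹ * ‖deriv (fun θ' => γ θ' t) θ‖ *
            Real.exp (-‖γ θ t‖ ^ 2 / (-4 * t)))
      Filter.atBot
      (nhds ((k jmax : ℝ) * Real.sqrt (2 * Real.pi / Real.exp 1))) := by
  have hjle : ∀ j, k j ≤ k jmax := by
    intro j
    refine hkmono.monotone ?_
    have := j.isLt
    rw [Fin.le_def, hjmax]; omega
  set S : ℝ → ℝ := fun t => ∑ j : Fin m, ((k j:ℝ))^2 * (r t)^(2*(k j)^2) with hSdef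
  -- r tends to +∞
  have hm0 : (0:ℝ) < m := by exact_mod_cast hm
  have hrt : Tendsto r atBot atTop := by
    rw [tendsto_atTop]
    intro M
    set M' := max M 1 with hM'def
    have hM' : 1 ≤ M' := le_max_right _ _
    have hpos : (0:ℝ) < m * M' ^ (2*(k jmax)^2) := by positivity
    rw [eventually_atBot]
    refine ⟨-(m * M' ^ (2*(k jmax)^2)) / 2 - 1, fun t ht => ?_⟩
    have ht' : t < -((m:ℝ) * M' ^ (2*(k jmax)^2)) / 2 := by linarith
    have ht0 : t < 0 := by nlinarith
    obtain ⟨hrpos, hsum⟩ := hr t ht0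
    by_contra h
    push_neg at h
    have hle : r t ≤ M' := le_trans h.le (le_max_left _ _)
    have hterm : ∀ j : Fin m, r t ^ (2*(k j)^2) ≤ M' ^ (2*(k jmax)^2) := by
      intro j
      calc r t ^ (2*(k j)^2) ≤ M' ^ (2*(k j)^2) := pow_le_pow_left₀ hrpos.le hle _
        _ ≤ M' ^ (2*(k jmax)^2) :=
          pow_le_pow_right₀ hM' (Nat.mul_le_mul_left 2 (Nat.pow_le_pow_left (hjle j) 2))
    have hsum' : -2*t ≤ (m:ℝ) * M'^(2*(k jmax)^2) := by
      rw [← hsum]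
      calc ∑ j : Fin m, r t ^ (2*(k j)^2) ≤ ∑ _j : Fin m, M' ^ (2*(k jmax)^2) :=
            Finset.sum_le_sum fun j _ => hterm j
        _ = (m:ℝ) * M'^(2*(k jmax)^2) := by simp [mul_comm]
    linarith
  -- norm of γ
  have hSnonneg : ∀ t : ℝ, 0 ≤ S t := by
    intro t
    refine Finset.sum_nonneg fun j _ => ?_
    have : r t ^ (2*(k j)^2) = (r t ^ (k j)^2)^2 := by
      rw [← pow_mul]; ring_nf
    rw [this]; positivity
  have hnormγ : ∀ t, t < (0:ℝ) → ∀ θ : ℝ, ‖γ θ t‖^2 = -2*t := by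
    intro t ht θ
    obtain ⟨hrpos, hsum⟩ := hr t ht
    rw [EuclideanSpace.norm_eq, Real.sq_sqrt (Finset.sum_nonneg fun i _ => by positivity)]
    rw [← hsum, Fintype.sum_prod_type]
    refine Finset.sum_congr rfl fun j _ => ?_
    rw [Fin.sum_univ_two, (hγ θ t j).1, (hγ θ t j).2]
    have hsc := Real.sin_sq_add_cos_sq ((k j : ℝ) * θ)
    have hpow : r t ^ (2*(k j)^2) = (r t ^ (k j)^2)^2 := by rw [← pow_mul]; ring_nf
    simp only [Real.norm_eq_abs, sq_abs]
    rw [hpow]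
    nlinarith [hsc]
  -- derivative
  have hderiv : ∀ t, t < (0:ℝ) → ∀ θ : ℝ, ‖deriv (fun θ' => γ θ' t) θ‖ = Real.sqrt (S t) := by
    intro t ht θ
    obtain ⟨hrpos, hsum⟩ := hr t ht
    set L := PiLp.continuousLinearEquiv 2 ℝ (fun _ : Fin m × Fin 2 => ℝ) with hL
    set g : ℝ → (Fin m × Fin 2 → ℝ) := fun θ' p =>
      if p.2 = 0 then r t ^ ((k p.1)^2) * Real.cos (k p.1 * θ')
      else r t ^ ((k p.1)^2) * Real.sin (k p.1 * θ') with hg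
    set w : Fin m × Fin 2 → ℝ := fun p =>
      if p.2 = 0 then r t ^ ((k p.1)^2) * (-Real.sin (k p.1 * θ) * (k p.1))
      else r t ^ ((k p.1)^2) * (Real.cos (k p.1 * θ) * (k p.1)) with hw
    have hgd : HasDerivAt g w θ := by
      rw [hasDerivAt_pi]
      rintro ⟨j, i⟩
      have h1 : HasDerivAt (fun θ' : ℝ => (k j:ℝ) * θ') ((k j : ℝ)) θ := by
        simpa using (hasDerivAt_id θ).const_mul ((k j : ℝ))
      fin_cases i
      · simpa [hg, hw] using (h1.cos.const_mul (r t ^ ((k j)^2)))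
      · simpa [hg, hw] using (h1.sin.const_mul (r t ^ ((k j)^2)))
    have hcomp : HasDerivAt (fun θ' => γ θ' t) (L.symm w) θ := by
      have := (L.symm.toContinuousLinearMap.hasFDerivAt (x := g θ)).comp_hasDerivAt θ hgd
      have heq : (fun θ' => γ θ' t) = (⇑L.symm.toContinuousLinearMap) ∘ g := by
        funext θ'
        ext p
        rcases p with ⟨j, i⟩
        fin_cases i
        · simpa [hg, hL] using (hγ θ' t j).1
        · simpa [hg, hL] using (hγ θ' t j).2
      rw [heq]
      exact this
    rw [hcomp.deriv, EuclideanSpace.norm_eq]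
    congr 1
    rw [Fintype.sum_prod_type]
    refine Finset.sum_congr rfl fun j _ => ?_
    rw [Fin.sum_univ_two]
    have hLs : ∀ p, (L.symm w : EuclideanSpace ℝ (Fin m × Fin 2)) p = w p := fun p => rfl
    rw [hLs, hLs]
    simp only [hw, Real.norm_eq_abs, sq_abs]
    norm_num
    have hsc := Real.sin_sq_add_cos_sq ((k j : ℝ) * θ)
    have hpow : r t ^ (2*(k j)^2) = (r t ^ (k j)^2)^2 := by rw [← pow_mul]; ring_nf
    rw [hpow]
    nlinarith [hsc]
  -- value of the integral for t < 0
  set C : ℝ := (Real.sqrt (4 * Real.pi))⁻¹ * (2 * Real.pi * Real.exp (-2⁻¹)) with hC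
  have hval : ∀ t, t < (0:ℝ) →
      (Real.sqrt (4 * Real.pi))⁻¹ *
        ∫ θ in (0:ℝ)..(2 * Real.pi),
          (Real.sqrt (-t))⁻¹ * ‖deriv (fun θ' => γ θ' t) θ‖ *
            Real.exp (-‖γ θ t‖ ^ 2 / (-4 * t))
      = C * Real.sqrt (S t / (-t)) := by
    intro t ht
    have hexp : ∀ θ : ℝ, Real.exp (-‖γ θ t‖ ^ 2 / (-4 * t)) = Real.exp (-2⁻¹) := by
      intro θ
      congr 1
      rw [hnormγ t ht θ, div_eq_iff (by linarith : (-4:ℝ)*t ≠ 0)]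
      ring
    have hintg : (fun θ : ℝ => (Real.sqrt (-t))⁻¹ * ‖deriv (fun θ' => γ θ' t) θ‖ *
        Real.exp (-‖γ θ t‖ ^ 2 / (-4 * t)))
        = fun _ : ℝ => (Real.sqrt (-t))⁻¹ * Real.sqrt (S t) * Real.exp (-2⁻¹) := by
      funext θ
      rw [hexp θ, hderiv t ht θ]
    rw [hintg, intervalIntegral.integral_const]
    have hsq : (Real.sqrt (-t))⁻¹ * Real.sqrt (S t) = Real.sqrt (S t / (-t)) := by
      rw [Real.sqrt_div (hSnonneg t), div_eq_mul_inv, mul_comm]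
    rw [hC, smul_eq_mul]
    rw [← hsq]
    ring
  -- the limit of S t / (-t)
  have hq : Tendsto (fun t => S t / (-t)) atBot (nhds (2 * (k jmax:ℝ)^2)) := by
    have hFr := (ratio_limit m k hkpos hkmono jmax hjle).comp hrt
    have h2 := hFr.const_mul (2:ℝ)
    refine Tendsto.congr' ?_ h2
    filter_upwards [eventually_lt_atBot (0:ℝ)] with t ht
    obtain ⟨hrpos, hsum⟩ := hr t ht
    show 2 * ((∑ j : Fin m, ((k j:ℝ))^2 * (r t) ^ (2*(k j)^2)) /
        (∑ j : Fin m, (r t) ^ (2*(k j)^2))) = S t / (-t)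
    rw [hsum, hSdef]
    field_simp
  -- conclude
  have hfinal : Tendsto (fun t => C * Real.sqrt (S t / (-t))) atBot
      (nhds (C * Real.sqrt (2 * (k jmax:ℝ)^2))) := by
    exact ((Real.continuous_sqrt.tendsto _).comp hq).const_mul C
  have hCeq : C * Real.sqrt (2 * (k jmax:ℝ)^2)
      = (k jmax : ℝ) * Real.sqrt (2 * Real.pi / Real.exp 1) := by
    have e1 : Real.sqrt (Real.exp 1) = Real.exp 2⁻¹ := by
      rw [show (1:ℝ) = 2⁻¹ + 2⁻¹ by norm_num, Real.exp_add,
        Real.sqrt_mul_self (Real.exp_pos _).le]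
    have e2 : Real.sqrt (4*Real.pi) = 2 * Real.sqrt Real.pi := by
      rw [show (4:ℝ)*Real.pi = 2^2*Real.pi by norm_num, Real.sqrt_mul (by positivity),
        Real.sqrt_sq (by norm_num)]
    have e3 : Real.sqrt (2*(k jmax:ℝ)^2) = Real.sqrt 2 * (k jmax:ℝ) := by
      rw [Real.sqrt_mul (by norm_num), Real.sqrt_sq (by positivity)]
    have e4 : Real.sqrt (2*Real.pi/Real.exp 1) = Real.sqrt 2 * Real.sqrt Real.pi / Real.exp 2⁻¹ := by
      rw [Real.sqrt_div (by positivity), Real.sqrt_mul (by norm_num), e1]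
    rw [hC, e2, e3, e4, Real.exp_neg]
    have hππ : Real.sqrt Real.pi * Real.sqrt Real.pi = Real.pi :=
      Real.mul_self_sqrt Real.pi_pos.le
    have hπ0 : Real.sqrt Real.pi ≠ 0 := by positivity
    have hexp0 : Real.exp 2⁻¹ ≠ 0 := (Real.exp_pos _).ne'
    field_simp
    linear_combination (-(k jmax:ℝ))*hππ
  rw [← hCeq]
  refine Tendsto.congr' ?_ hfinal
  filter_upwards [eventually_lt_atBot (0:ℝ)] with t ht
  exact (hval t ht).symm
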